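/- For m > 0 define k_m(z) := (1/2)·∫_0^∞ exp(−m²z²/(2v))·exp(−v/2) dv for z ≥ 0. Then k_m(0) = 1, 0 ≤ k_m(z) ≤ 1 for all z ≥ 0, and there exists a universal constant C > 0 such that for all m > 0, all r ≥ 0 and all ε ∈ (0,1]: 0 ≤ ∫_1^{1/ε} (1 − k_m(u·r)) · (1/u) du ≤ C·m·r/ε. Consequently, for the kernel H_ε(x,y) := ∫_1^{1/ε} k_m(u‖x−y‖) (1/u) du on ℝ^d, one has H_ε(x,x) = log(1/ε) and |H_ε(x,x) − H_ε(x,y)| ≤ C·m·‖x−y‖/ε. -/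

import Mathlib

open MeasureTheory intervalIntegral

noncomputable section

/-- `km m z = (1/2) ∫_0^∞ exp(−m²z²/(2v)) exp(−v/2) dv`. -/
def km (m z : ℝ) : ℝ :=
  (1 / 2) * ∫ v in Set.Ioi (0:ℝ), Real.exp (-(m ^ 2 * z ^ 2) / (2 * v)) * Real.exp (-v / 2)

/-- The integral cut-off kernel `H_ε(x,y) = ∫_1^{1/ε} k_m(u‖x−y‖) (1/u) du` on `ℝ^d`. -/
def Hker (d : ℕ) (m ε : ℝ) (x y : EuclideanSpace ℝ (Fin d)) : ℝ :=
  ∫ u in (1:ℝ)..(1 / ε), km m (u * ‖x - y‖) * (1 / u)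

namespace KmAux

open Set Real

/-- the dominating exponential -/
lemma g_int : IntegrableOn (fun v : ℝ => Real.exp (-v / 2)) (Ioi 0) := by
  have h := exp_neg_integrableOn_Ioi 0 (by norm_num : (0:ℝ) < 1/2)
  exact h.congr_fun (fun v _ => by norm_num [neg_div]; ring_nf) measurableSet_Ioi

lemma g_val : ∫ v in Ioi (0:ℝ), Real.exp (-v / 2) = 2 := by
  have h := integral_comp_mul_left_Ioi (fun x => Real.exp (-x)) 0
    (by norm_num : (0:ℝ) < 1/2)
  simp only [mul_zero, smul_eq_mul, integral_exp_neg_Ioi_zero, mul_one] at h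
  have : (∫ v in Ioi (0:ℝ), Real.exp (-v / 2)) = ∫ x in Ioi (0:ℝ), Real.exp (-(1/2 * x)) := by
    refine setIntegral_congr_fun measurableSet_Ioi (fun v _ => ?_)
    norm_num [neg_div]; ring_nf
  rw [this, h]; norm_num

lemma meas_A (c : ℝ) :
    Measurable fun v : ℝ => Real.exp (-c / (2 * v)) * Real.exp (-v / 2) := by
  fun_prop

lemma A_le_g (c : ℝ) (hc : 0 ≤ c) {v : ℝ} (hv : 0 < v) :
    Real.exp (-c / (2 * v)) * Real.exp (-v / 2) ≤ Real.exp (-v / 2) := by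
  have h1 : Real.exp (-c / (2 * v)) ≤ 1 := by
    rw [Real.exp_le_one_iff]
    apply div_nonpos_of_nonpos_of_nonneg <;> nlinarith
  nlinarith [Real.exp_pos (-v / 2), Real.exp_pos (-c / (2*v))]

lemma A_nonneg (c v : ℝ) :
    0 ≤ Real.exp (-c / (2 * v)) * Real.exp (-v / 2) := by positivity

lemma A_int (c : ℝ) (hc : 0 ≤ c) :
    IntegrableOn (fun v : ℝ => Real.exp (-c / (2 * v)) * Real.exp (-v / 2)) (Ioi 0) := by
  refine g_int.mono' (meas_A c).aestronglyMeasurable ?_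
  filter_upwards [ae_restrict_mem measurableSet_Ioi] with v hv
  rw [Real.norm_eq_abs, abs_of_nonneg (A_nonneg c v)]
  exact A_le_g c hc hv

lemma km_eq (m z : ℝ) :
    km m z = (1/2) * ∫ v in Ioi (0:ℝ),
      Real.exp (-(m ^ 2 * z ^ 2) / (2 * v)) * Real.exp (-v / 2) := rfl

lemma km_zero (m : ℝ) : km m 0 = 1 := by
  rw [km_eq]
  have : (∫ v in Ioi (0:ℝ),
      Real.exp (-(m ^ 2 * (0:ℝ) ^ 2) / (2 * v)) * Real.exp (-v / 2))
      = ∫ v in Ioi (0:ℝ), Real.exp (-v / 2) := by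
    refine setIntegral_congr_fun measurableSet_Ioi (fun v _ => ?_)
    simp
  rw [this, g_val]; norm_num

lemma km_nonneg (m z : ℝ) : 0 ≤ km m z := by
  rw [km_eq]
  have : 0 ≤ ∫ v in Ioi (0:ℝ),
      Real.exp (-(m ^ 2 * z ^ 2) / (2 * v)) * Real.exp (-v / 2) :=
    setIntegral_nonneg measurableSet_Ioi (fun v _ => A_nonneg _ v)
  linarith

lemma km_le_one (m z : ℝ) : km m z ≤ 1 := by
  rw [km_eq]
  have hc : (0:ℝ) ≤ m ^ 2 * z ^ 2 := by positivity
  have h : (∫ v in Ioi (0:ℝ),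
      Real.exp (-(m ^ 2 * z ^ 2) / (2 * v)) * Real.exp (-v / 2))
      ≤ ∫ v in Ioi (0:ℝ), Real.exp (-v / 2) := by
    refine setIntegral_mono_on (A_int _ hc) g_int measurableSet_Ioi (fun v hv => ?_)
    exact A_le_g _ hc hv
  rw [g_val] at h; linarith

lemma one_sub_exp_neg_le_sqrt {x : ℝ} (hx : 0 ≤ x) : 1 - Real.exp (-x) ≤ Real.sqrt x := by
  rcases le_or_gt x 1 with h | h
  · have h1 : 1 - Real.exp (-x) ≤ x := by nlinarith [Real.add_one_le_exp (-x)]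
    have h2 : x ≤ Real.sqrt x := by
      nlinarith [Real.sq_sqrt hx, Real.sqrt_nonneg x, Real.sqrt_le_sqrt h, Real.sqrt_one]
    linarith
  · have h2 : (1:ℝ) ≤ Real.sqrt x := by
      rw [show (1:ℝ) = Real.sqrt 1 from Real.sqrt_one.symm]
      exact Real.sqrt_le_sqrt h.le
    nlinarith [Real.exp_pos (-x)]

/-- the comparison function -/
def φ (v : ℝ) : ℝ := (Real.sqrt v)⁻¹ * Real.exp (-v / 2)

lemma φ_nonneg (v : ℝ) : 0 ≤ φ v := by unfold φ; positivity

lemma φ_int : IntegrableOn φ (Ioi 0) := by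
  have h := integrableOn_rpow_mul_exp_neg_mul_rpow
    (by norm_num : (-1:ℝ) < -(1/2)) (by norm_num : (0:ℝ) < 1) (by norm_num : (0:ℝ) < 1/2)
  refine h.congr_fun (fun v hv => ?_) measurableSet_Ioi
  have hv' : (0:ℝ) < v := hv
  simp only [Real.rpow_one]
  unfold φ
  rw [Real.rpow_neg hv'.le, Real.sqrt_eq_rpow]
  congr 1
  ring

/-- the base constant -/
def C₀ : ℝ := (1/2) * ∫ v in Ioi (0:ℝ), φ v

lemma C₀_nonneg : 0 ≤ C₀ := by
  have : 0 ≤ ∫ v in Ioi (0:ℝ), φ v :=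
    setIntegral_nonneg measurableSet_Ioi (fun v _ => φ_nonneg v)
  unfold C₀; linarith

lemma pointwise (m z : ℝ) (hm : 0 ≤ m) (hz : 0 ≤ z) {v : ℝ} (hv : 0 < v) :
    Real.exp (-v / 2) - Real.exp (-(m ^ 2 * z ^ 2) / (2 * v)) * Real.exp (-v / 2)
      ≤ m * z * φ v := by
  have hx : (0:ℝ) ≤ m ^ 2 * z ^ 2 / (2 * v) := by positivity
  have h1 : 1 - Real.exp (-(m ^ 2 * z ^ 2 / (2 * v))) ≤ Real.sqrt (m ^ 2 * z ^ 2 / (2 * v)) :=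
    one_sub_exp_neg_le_sqrt hx
  have h2 : Real.sqrt (m ^ 2 * z ^ 2 / (2 * v)) ≤ m * z / Real.sqrt v := by
    have hle : m ^ 2 * z ^ 2 / (2 * v) ≤ (m * z) ^ 2 / v := by
      rw [div_le_div_iff₀ (by linarith) hv]; nlinarith
    calc Real.sqrt (m ^ 2 * z ^ 2 / (2 * v)) ≤ Real.sqrt ((m * z) ^ 2 / v) :=
          Real.sqrt_le_sqrt hle
      _ = m * z / Real.sqrt v := by
          rw [Real.sqrt_div (sq_nonneg _), Real.sqrt_sq (by positivity)]
  have he : (0:ℝ) < Real.exp (-v / 2) := Real.exp_pos _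
  have hneg : -(m ^ 2 * z ^ 2) / (2 * v) = -(m ^ 2 * z ^ 2 / (2 * v)) := by ring
  have hs : (0:ℝ) < Real.sqrt v := Real.sqrt_pos.mpr hv
  rw [hneg]
  unfold φ
  calc Real.exp (-v / 2) - Real.exp (-(m ^ 2 * z ^ 2 / (2 * v))) * Real.exp (-v / 2)
      = (1 - Real.exp (-(m ^ 2 * z ^ 2 / (2 * v)))) * Real.exp (-v / 2) := by ring
    _ ≤ (m * z / Real.sqrt v) * Real.exp (-v / 2) :=
        mul_le_mul_of_nonneg_right (h1.trans h2) he.le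
    _ = m * z * ((Real.sqrt v)⁻¹ * Real.exp (-v / 2)) := by field_simp

lemma key (m z : ℝ) (hm : 0 ≤ m) (hz : 0 ≤ z) :
    1 - km m z ≤ m * z * C₀ := by
  have hc : (0:ℝ) ≤ m ^ 2 * z ^ 2 := by positivity
  have hsub : 1 - km m z = (1/2) * ∫ v in Ioi (0:ℝ),
      (Real.exp (-v / 2) -
        Real.exp (-(m ^ 2 * z ^ 2) / (2 * v)) * Real.exp (-v / 2)) := by
    rw [integral_sub g_int (A_int _ hc), km_eq, g_val]; ring
  rw [hsub]
  have hmono : (∫ v in Ioi (0:ℝ),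
      (Real.exp (-v / 2) -
        Real.exp (-(m ^ 2 * z ^ 2) / (2 * v)) * Real.exp (-v / 2)))
      ≤ ∫ v in Ioi (0:ℝ), m * z * φ v :=
    setIntegral_mono_on (g_int.sub (A_int _ hc)) (φ_int.const_mul (m*z)) measurableSet_Ioi
      (fun v hv => pointwise m z hm hz hv)
  rw [MeasureTheory.integral_const_mul] at hmono
  unfold C₀
  nlinarith [hmono]

lemma km_cont (m : ℝ) : Continuous fun z => km m z := by
  simp only [km_eq]
  refine continuous_const.mul ?_
  refine continuous_of_dominated
    (fun z => (meas_A (m ^ 2 * z ^ 2)).aestronglyMeasurable)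
    (fun z => ?_) g_int ?_
  · filter_upwards [ae_restrict_mem measurableSet_Ioi] with v hv
    rw [Real.norm_eq_abs, abs_of_nonneg (A_nonneg _ v)]
    exact A_le_g _ (by positivity) hv
  · filter_upwards [ae_restrict_mem measurableSet_Ioi] with v hv
    have h2v : (2:ℝ) * v ≠ 0 := by have : (0:ℝ) < v := hv; positivity
    exact ((((continuous_const.mul ((continuous_id.pow 2))).neg).div_const (2*v)).rexp).mul
      continuous_const

lemma interval_bound (m r ε : ℝ) (hm : 0 < m) (hr : 0 ≤ r) (hε : ε ∈ Set.Ioc (0:ℝ) 1) :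
    0 ≤ (∫ u in (1:ℝ)..(1/ε), (1 - km m (u * r)) * (1 / u)) ∧
    (∫ u in (1:ℝ)..(1/ε), (1 - km m (u * r)) * (1 / u)) ≤ (C₀ + 1) * m * r / ε := by
  obtain ⟨hε0, hε1⟩ := hε
  have hb : (1:ℝ) ≤ 1/ε := by rw [le_div_iff₀ hε0]; linarith
  have hfc : ContinuousOn (fun u : ℝ => (1 - km m (u * r)) * (1 / u)) (Set.Icc 1 (1/ε)) := by
    apply ContinuousOn.mul
    · exact (continuous_const.sub
        ((km_cont m).comp (continuous_id.mul continuous_const))).continuousOn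
    · exact continuousOn_const.div continuousOn_id (fun u hu => by
        have h1 := hu.1; intro h0; rw [h0] at h1; norm_num at h1)
  have hint : IntervalIntegrable (fun u : ℝ => (1 - km m (u * r)) * (1 / u)) volume 1 (1/ε) := by
    apply ContinuousOn.intervalIntegrable
    rwa [Set.uIcc_of_le hb]
  constructor
  · apply intervalIntegral.integral_nonneg hb
    intro u hu
    have hu1 : (1:ℝ) ≤ u := hu.1
    have h1 : 0 ≤ 1 - km m (u*r) := by linarith [km_le_one m (u*r)]
    have h2 : 0 ≤ 1/u := by positivity
    exact mul_nonneg h1 h2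
  · have hle : ∀ u ∈ Set.Icc (1:ℝ) (1/ε), (1 - km m (u*r)) * (1/u) ≤ C₀ * m * r := by
      intro u hu
      have hu1 : (1:ℝ) ≤ u := hu.1
      have hu0 : (0:ℝ) < u := by linarith
      have hk := key m (u*r) hm.le (by positivity)
      have h1 : (1 - km m (u*r)) * (1/u) ≤ (m*(u*r)*C₀) * (1/u) :=
        mul_le_mul_of_nonneg_right hk (by positivity)
      have h2 : (m*(u*r)*C₀) * (1/u) = C₀ * m * r := by field_simp
      linarith
    have hmono := intervalIntegral.integral_mono_on hb hint intervalIntegrable_const hle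
    rw [intervalIntegral.integral_const, smul_eq_mul] at hmono
    have hC0 := C₀_nonneg
    have hbe : (C₀+1) * m * r / ε = (C₀+1) * m * r * (1/ε) := by ring
    nlinarith [mul_nonneg (mul_nonneg hC0 hm.le) hr, mul_nonneg hm.le hr]

end KmAux

theorem integral_cutoff_kernel_properties :
    ∃ C : ℝ, 0 < C ∧
      ∀ m : ℝ, 0 < m →
        (km m 0 = 1) ∧
        (∀ z : ℝ, 0 ≤ z → 0 ≤ km m z ∧ km m z ≤ 1) ∧
        (∀ r : ℝ, 0 ≤ r → ∀ ε ∈ Set.Ioc (0:ℝ) 1,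
          0 ≤ ∫ u in (1:ℝ)..(1 / ε), (1 - km m (u * r)) * (1 / u) ∧
          ∫ u in (1:ℝ)..(1 / ε), (1 - km m (u * r)) * (1 / u) ≤ C * m * r / ε) ∧
        (∀ d : ℕ, ∀ ε ∈ Set.Ioc (0:ℝ) 1, ∀ x y : EuclideanSpace ℝ (Fin d),
          Hker d m ε x x = Real.log (1 / ε) ∧
          |Hker d m ε x x - Hker d m ε x y| ≤ C * m * ‖x - y‖ / ε) := by
  refine ⟨KmAux.C₀ + 1, by linarith [KmAux.C₀_nonneg], fun m hm => ?_⟩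
  refine ⟨KmAux.km_zero m, fun z _ => ⟨KmAux.km_nonneg m z, KmAux.km_le_one m z⟩,
    fun r hr ε hε => KmAux.interval_bound m r ε hm hr hε, fun d ε hε x y => ?_⟩
  obtain ⟨hε0, hε1⟩ := hε
  have hb : (1:ℝ) ≤ 1/ε := by rw [le_div_iff₀ hε0]; linarith
  set r := ‖x - y‖ with hrdef
  have hr : 0 ≤ r := norm_nonneg _
  have h0mem : (0:ℝ) ∉ Set.uIcc (1:ℝ) (1/ε) := by
    rw [Set.uIcc_of_le hb]
    intro h; have := h.1; norm_num at this
  have hxx : Hker d m ε x x = Real.log (1/ε) := by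
    unfold Hker
    rw [sub_self, norm_zero]
    have hcong : (∫ u in (1:ℝ)..(1/ε), km m (u * 0) * (1/u))
        = ∫ u in (1:ℝ)..(1/ε), 1/u := by
      apply intervalIntegral.integral_congr
      intro u _
      simp [KmAux.km_zero m]
    rw [hcong, integral_one_div h0mem, div_one]
  refine ⟨hxx, ?_⟩
  have h1int : IntervalIntegrable (fun u : ℝ => 1/u) volume 1 (1/ε) := by
    apply ContinuousOn.intervalIntegrable
    rw [Set.uIcc_of_le hb]
    exact continuousOn_const.div continuousOn_id (fun u hu => by
      have h1 := hu.1; intro h0; rw [h0] at h1; norm_num at h1)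
  have h2int : IntervalIntegrable (fun u : ℝ => km m (u * r) * (1/u)) volume 1 (1/ε) := by
    apply ContinuousOn.intervalIntegrable
    rw [Set.uIcc_of_le hb]
    apply ContinuousOn.mul
    · exact ((KmAux.km_cont m).comp (continuous_id.mul continuous_const)).continuousOn
    · exact continuousOn_const.div continuousOn_id (fun u hu => by
        have h1 := hu.1; intro h0; rw [h0] at h1; norm_num at h1)
  have hsub : Hker d m ε x x - Hker d m ε x y
      = ∫ u in (1:ℝ)..(1/ε), (1 - km m (u * r)) * (1/u) := by
    unfold Hker
    rw [sub_self, norm_zero, ← hrdef]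
    have hcong : (∫ u in (1:ℝ)..(1/ε), km m (u * 0) * (1/u))
        = ∫ u in (1:ℝ)..(1/ε), 1/u := by
      apply intervalIntegral.integral_congr
      intro u _
      simp [KmAux.km_zero m]
    rw [hcong, ← intervalIntegral.integral_sub h1int h2int]
    apply intervalIntegral.integral_congr
    intro u _
    ring
  have hbd := KmAux.interval_bound m r ε hm hr ⟨hε0, hε1⟩
  rw [hsub, abs_of_nonneg hbd.1]
  exact hbd.2
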